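/- For any pure state |Ψ⟩ in a finite-dimensional complex Hilbert space and any finite set S of unit vectors (the 'free' states), the minimum of ‖c‖₁² over all decompositions |Ψ⟩ = Σⱼ cⱼ|φⱼ⟩ with |φⱼ⟩ ∈ S equals the maximum of |⟨ω|Ψ⟩|² over all vectors |ω⟩ satisfying |⟨ω|φ⟩| ≤ 1 for all |φ⟩ ∈ S (strong duality for the extent), provided S spans the space. -/

import Mathlib

open scoped InnerProductSpace

noncomputable section

namespace ExtentAux

/-- Represent a continuous real-linear functional on a complex Euclidean space
as the real part of an inner product. -/
lemma repr_exists {d : ℕ} (f : EuclideanSpace ℂ (Fin d) →L[ℝ] ℝ) :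
    ∃ ω : EuclideanSpace ℂ (Fin d), ∀ y, f y = (⟪ω, y⟫_ℂ).re := by
  classical
  set e : Fin d → EuclideanSpace ℂ (Fin d) := fun i => EuclideanSpace.single i (1:ℂ) with he
  set ω : EuclideanSpace ℂ (Fin d) :=
    (WithLp.equiv 2 (Fin d → ℂ)).symm (fun i => ⟨f (e i), f (Complex.I • e i)⟩) with hω
  refine ⟨ω, ?_⟩
  intro y
  have hy : (∑ i, (y i : ℂ) • e i) = y := by
    simpa [he, EuclideanSpace.basisFun_apply, EuclideanSpace.basisFun_repr] using
      (EuclideanSpace.basisFun (Fin d) ℂ).sum_repr y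
  have hsplit : ∀ i, (y i : ℂ) • e i = (y i).re • e i + (y i).im • (Complex.I • e i) := by
    intro i
    conv_lhs => rw [← Complex.re_add_im (y i)]
    rw [add_smul, mul_smul, Complex.coe_smul, Complex.coe_smul]
  have lhs : f y = ∑ i, ((y i).re * f (e i) + (y i).im * f (Complex.I • e i)) := by
    conv_lhs => rw [← hy]
    rw [map_sum]
    refine Finset.sum_congr rfl fun i _ => ?_
    rw [hsplit i, map_add, map_smul, map_smul]
    simp [smul_eq_mul]
  have rhs : (⟪ω, y⟫_ℂ).re = ∑ i, ((y i).re * f (e i) + (y i).im * f (Complex.I • e i)) := by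
    rw [PiLp.inner_apply]
    rw [Complex.re_sum]
    refine Finset.sum_congr rfl fun i _ => ?_
    simp only [hω, WithLp.equiv_symm_apply, PiLp.toLp_apply, RCLike.inner_apply]
    simp [Complex.mul_re, mul_comm]
  rw [lhs, rhs]

/-- Collapse an arbitrary finitely-indexed decomposition into an `S`-indexed one,
without increasing the ℓ¹-norm. -/
lemma collapse {d m : ℕ} (S : Finset (EuclideanSpace ℂ (Fin d)))
    (c : Fin m → ℂ) (φ : Fin m → EuclideanSpace ℂ (Fin d)) (hφ : ∀ j, φ j ∈ S) :
    ∃ cc : ↥S → ℂ, ∑ j, c j • φ j = ∑ i : ↥S, cc i • (i : EuclideanSpace ℂ (Fin d)) ∧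
      ∑ i : ↥S, ‖cc i‖ ≤ ∑ j, ‖c j‖ := by
  classical
  set g : Fin m → ↥S := fun j => ⟨φ j, hφ j⟩ with hg
  refine ⟨fun i => ∑ j ∈ Finset.univ.filter (fun j => g j = i), c j, ?_, ?_⟩
  · rw [← Finset.sum_fiberwise Finset.univ g (fun j => c j • φ j)]
    refine Finset.sum_congr rfl fun i _ => ?_
    rw [Finset.sum_smul]
    refine Finset.sum_congr rfl fun j hj => ?_
    have h1 : g j = i := (Finset.mem_filter.mp hj).2
    have h2 : φ j = ↑i := by rw [← h1]
    rw [h2]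
  · calc ∑ i : ↥S, ‖∑ j ∈ Finset.univ.filter (fun j => g j = i), c j‖
        ≤ ∑ i : ↥S, ∑ j ∈ Finset.univ.filter (fun j => g j = i), ‖c j‖ :=
          Finset.sum_le_sum fun i _ => norm_sum_le _ _
      _ = ∑ j, ‖c j‖ := Finset.sum_fiberwise _ _ _

lemma key_witness {d : ℕ} (S : Finset (EuclideanSpace ℂ (Fin d))) (hS : S.Nonempty)
    (Ψ : EuclideanSpace ℂ (Fin d))
    (hdec : ∃ c : ↥S → ℂ, Ψ = ∑ i : ↥S, c i • (i : EuclideanSpace ℂ (Fin d)))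
    (t : ℝ) (ht : 0 ≤ t)
    (hnot : ∀ c : ↥S → ℂ, Ψ = ∑ i : ↥S, c i • (i : EuclideanSpace ℂ (Fin d)) →
      t < ∑ i : ↥S, ‖c i‖) :
    ∃ ω : EuclideanSpace ℂ (Fin d),
      (∀ φ ∈ S, ‖⟪ω, φ⟫_ℂ‖ ≤ 1) ∧ t < ‖⟪ω, Ψ⟫_ℂ‖ := by
  classical
  set g : (↥S → ℂ) → EuclideanSpace ℂ (Fin d) :=
    fun c => ∑ i : ↥S, c i • (i : EuclideanSpace ℂ (Fin d)) with hgdef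
  set Ball : Set (↥S → ℂ) := {c | ∑ i : ↥S, ‖c i‖ ≤ t} with hBall
  have hg_cont : Continuous g := by
    apply continuous_finset_sum
    intro i _
    exact (continuous_apply i).smul continuous_const
  have hBall_closed : IsClosed Ball := by
    apply isClosed_le _ continuous_const
    apply continuous_finset_sum
    intro i _
    exact continuous_norm.comp (continuous_apply i)
  have hBall_compact : IsCompact Ball := by
    refine (isCompact_closedBall (0 : ↥S → ℂ) t).of_isClosed_subset hBall_closed ?_
    intro c hc
    rw [Metric.mem_closedBall, dist_zero_right]
    rw [pi_norm_le_iff_of_nonneg ht]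
    intro i
    calc ‖c i‖ = ‖c i‖ := rfl
      _ ≤ ∑ i : ↥S, ‖c i‖ :=
          Finset.single_le_sum (fun i _ => norm_nonneg _) (Finset.mem_univ i)
      _ ≤ t := hc
  have hK_compact : IsCompact (g '' Ball) := hBall_compact.image hg_cont
  have hK_convex : Convex ℝ (g '' Ball) := by
    rintro x ⟨c, hc, rfl⟩ y ⟨c', hc', rfl⟩ a b ha hb hab
    refine ⟨a • c + b • c', ?_, ?_⟩
    · calc ∑ i : ↥S, ‖(a • c + b • c') i‖
          ≤ ∑ i : ↥S, (a * ‖c i‖ + b * ‖c' i‖) := by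
            refine Finset.sum_le_sum fun i _ => ?_
            have h1 : (a • c + b • c') i = (a : ℂ) * c i + (b : ℂ) * c' i := by
              simp [Complex.real_smul]
            rw [h1]
            refine (norm_add_le _ _).trans ?_
            simp [norm_mul, Complex.norm_real, Real.norm_eq_abs, abs_of_nonneg ha, abs_of_nonneg hb]
        _ = a * ∑ i : ↥S, ‖c i‖ + b * ∑ i : ↥S, ‖c' i‖ := by
            rw [Finset.sum_add_distrib, Finset.mul_sum, Finset.mul_sum]
        _ ≤ a * t + b * t :=
            add_le_add (mul_le_mul_of_nonneg_left hc ha) (mul_le_mul_of_nonneg_left hc' hb)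
        _ = t := by rw [← add_mul, hab, one_mul]
    · show g (a • c + b • c') = a • g c + b • g c'
      simp only [hgdef, Finset.smul_sum, ← Finset.sum_add_distrib]
      refine Finset.sum_congr rfl fun i _ => ?_
      simp only [Pi.add_apply, Pi.smul_apply, add_smul, smul_assoc]
  have hΨK : Ψ ∉ g '' Ball := by
    rintro ⟨c, hc, hgc⟩
    exact absurd hc (not_le.mpr (hnot c hgc.symm))
  obtain ⟨f, u, hfa, hfΨ⟩ :=
    geometric_hahn_banach_closed_point hK_convex hK_compact.isClosed hΨK
  obtain ⟨ω₀, hω₀⟩ := repr_exists f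
  have h0Ball : (0 : ↥S → ℂ) ∈ Ball := by simp [hBall, ht]
  have hu0 : 0 < u := by
    have := hfa (g 0) ⟨0, h0Ball, rfl⟩
    simpa [hgdef] using this
  -- bound t * |⟪ω₀, φ⟫| ≤ u for φ ∈ S
  have hkey : ∀ φ ∈ S, t * ‖⟪ω₀, φ⟫_ℂ‖ ≤ u := by
    intro φ hφ
    set z := ⟪ω₀, φ⟫_ℂ with hz
    rcases eq_or_ne z 0 with h | hzne
    · rw [h]; simpa using hu0.le
    have hzabs : (‖z‖ : ℂ) ≠ 0 := by
      exact_mod_cast norm_ne_zero_iff.mpr hzne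
    set ph : ℂ := starRingEnd ℂ z / (‖z‖ : ℂ) with hph
    have hphz : ph * z = (‖z‖ : ℂ) := by
      rw [hph, div_mul_eq_mul_div, mul_comm, Complex.mul_conj, Complex.normSq_eq_norm_sq]
      push_cast
      rw [sq, mul_div_assoc, div_self hzabs, mul_one]
    have habsph : ‖ph‖ = 1 := by
      rw [hph, norm_div, Complex.norm_conj, Complex.norm_real, Real.norm_eq_abs,
        abs_of_nonneg (norm_nonneg z), div_self (norm_ne_zero_iff.mpr hzne)]
    set c : ↥S → ℂ := fun i => if i = ⟨φ, hφ⟩ then (t : ℂ) * ph else 0 with hc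
    have hcBall : c ∈ Ball := by
      have : ∑ i : ↥S, ‖c i‖ = ‖(t : ℂ) * ph‖ := by
        rw [hc]
        simp [apply_ite (fun x : ℂ => ‖x‖)]
      rw [hBall, Set.mem_setOf_eq, this, norm_mul, habsph, Complex.norm_real, Real.norm_eq_abs,
        abs_of_nonneg ht, mul_one]
    have hgc : g c = ((t : ℂ) * ph) • φ := by
      rw [hgdef, hc]
      simp only [ite_smul, zero_smul]
      rw [Finset.sum_ite_eq' Finset.univ (⟨φ, hφ⟩ : ↥S)]
      simp
    have := hfa (g c) ⟨c, hcBall, rfl⟩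
    rw [hgc, hω₀, inner_smul_right, ← hz] at this
    rw [mul_assoc, hphz, ← Complex.ofReal_mul] at this
    rw [Complex.ofReal_re] at this
    exact this.le
  -- u < |⟪ω₀, Ψ⟫|
  have hΨlower : u < ‖⟪ω₀, Ψ⟫_ℂ‖ := by
    have h1 : u < (⟪ω₀, Ψ⟫_ℂ).re := by rw [← hω₀]; exact hfΨ
    exact h1.trans_le (Complex.re_le_norm _)
  -- the sup over S
  set M : ℝ := S.sup' hS (fun φ => ‖⟪ω₀, φ⟫_ℂ‖) with hM
  have hMle : ∀ φ ∈ S, ‖⟪ω₀, φ⟫_ℂ‖ ≤ M := fun φ h => by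
    rw [hM]; exact Finset.le_sup' (fun ψ => ‖⟪ω₀, ψ⟫_ℂ‖) h
  have hMpos : 0 < M := by
    by_contra hcon
    push_neg at hcon
    have hzero : ∀ φ ∈ S, ⟪ω₀, φ⟫_ℂ = 0 := by
      intro φ h
      have := (hMle φ h).trans hcon
      have h2 := norm_nonneg ⟪ω₀, φ⟫_ℂ
      have : ‖⟪ω₀, φ⟫_ℂ‖ = 0 := le_antisymm this h2
      exact norm_eq_zero.mp this
    obtain ⟨c, hcΨ⟩ := hdec
    have : ⟪ω₀, Ψ⟫_ℂ = 0 := by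
      rw [hcΨ, inner_sum]
      refine Finset.sum_eq_zero fun i _ => ?_
      rw [inner_smul_right, hzero i i.2, mul_zero]
    rw [this] at hΨlower
    simp at hΨlower
    linarith
  obtain ⟨φ₀, hφ₀S, hφ₀⟩ := Finset.exists_mem_eq_sup' hS (fun φ => ‖⟪ω₀, φ⟫_ℂ‖)
  have htM : t * M ≤ u := by
    have hMeq : M = ‖⟪ω₀, φ₀⟫_ℂ‖ := by rw [hM, hφ₀]
    rw [hMeq]
    exact hkey φ₀ hφ₀S
  have habs : ‖starRingEnd ℂ ((M : ℂ)⁻¹)‖ = M⁻¹ := by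
    rw [Complex.norm_conj, norm_inv, Complex.norm_real, Real.norm_eq_abs, abs_of_pos hMpos]
  refine ⟨((M : ℂ)⁻¹) • ω₀, ?_, ?_⟩
  · intro φ hφ
    rw [inner_smul_left, norm_mul, habs]
    have h1 := mul_le_mul_of_nonneg_left (hMle φ hφ) (inv_nonneg.mpr hMpos.le)
    refine h1.trans ?_
    rw [inv_mul_cancel₀ hMpos.ne']
  · rw [inner_smul_left, norm_mul, habs]
    have hX : t * M < ‖⟪ω₀, Ψ⟫_ℂ‖ := htM.trans_lt hΨlower
    have := (lt_div_iff₀ hMpos).mpr hX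
    rwa [div_eq_inv_mul] at this


end ExtentAux

open ExtentAux

/-- **Strong duality for the pure-state extent.**  For any pure state `Ψ` in a
finite-dimensional complex Hilbert space and any finite spanning set `S` of unit
vectors (the free states), the minimum of `‖c‖₁²` over free decompositions of `Ψ`
equals the maximum of `|⟨ω|Ψ⟩|²` over all `ω`-witnesses. -/
theorem extent_strong_duality {d : ℕ}
    (S : Finset (EuclideanSpace ℂ (Fin d)))
    (hunit : ∀ φ ∈ S, ‖φ‖ = 1)
    (hspan : Submodule.span ℂ (S : Set (EuclideanSpace ℂ (Fin d))) = ⊤)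
    (Ψ : EuclideanSpace ℂ (Fin d)) :
    sInf {r : ℝ | ∃ (m : ℕ) (c : Fin m → ℂ) (φ : Fin m → EuclideanSpace ℂ (Fin d)),
        (∀ j, φ j ∈ S) ∧ Ψ = ∑ j, c j • φ j ∧ r = (∑ j, ‖c j‖) ^ 2} =
    sSup {r : ℝ | ∃ ω : EuclideanSpace ℂ (Fin d),
        (∀ φ ∈ S, ‖⟪ω, φ⟫_ℂ‖ ≤ 1) ∧ r = ‖⟪ω, Ψ⟫_ℂ‖ ^ 2} := by
  classical
  set A := {r : ℝ | ∃ (m : ℕ) (c : Fin m → ℂ) (φ : Fin m → EuclideanSpace ℂ (Fin d)),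
      (∀ j, φ j ∈ S) ∧ Ψ = ∑ j, c j • φ j ∧ r = (∑ j, ‖c j‖) ^ 2} with hA
  set B := {r : ℝ | ∃ ω : EuclideanSpace ℂ (Fin d),
      (∀ φ ∈ S, ‖⟪ω, φ⟫_ℂ‖ ≤ 1) ∧ r = ‖⟪ω, Ψ⟫_ℂ‖ ^ 2} with hB
  have hB0 : (0 : ℝ) ∈ B := ⟨0, fun φ _ => by simp, by simp⟩
  have hAlb0 : ∀ r ∈ A, (0:ℝ) ≤ r := by
    rintro r ⟨m, c, φ, -, -, rfl⟩
    positivity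
  rcases eq_or_ne Ψ 0 with rfl | hΨne
  · -- trivial case Ψ = 0
    have hA0 : (0 : ℝ) ∈ A :=
      ⟨0, Fin.elim0, Fin.elim0, fun j => j.elim0, by simp, by simp⟩
    have hBval : ∀ r ∈ B, r = 0 := by
      rintro r ⟨ω, -, rfl⟩
      simp [inner_zero_right]
    have h1 : sInf A = 0 := le_antisymm (csInf_le ⟨0, hAlb0⟩ hA0) (le_csInf ⟨0, hA0⟩ hAlb0)
    have h2 : sSup B = 0 :=
      le_antisymm (csSup_le ⟨0, hB0⟩ fun r hr => (hBval r hr).le)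
        (le_csSup ⟨0, fun r hr => (hBval r hr).le⟩ hB0)
    rw [h1, h2]
  · -- main case
    have hSne : S.Nonempty := by
      rcases S.eq_empty_or_nonempty with rfl | h
      · rw [Finset.coe_empty, Submodule.span_empty] at hspan
        have : Ψ ∈ (⊥ : Submodule ℂ (EuclideanSpace ℂ (Fin d))) := by
          rw [hspan]; trivial
        exact absurd (Submodule.mem_bot ℂ |>.mp this) hΨne
      · exact h
    have hdec : ∃ c : ↥S → ℂ, Ψ = ∑ i : ↥S, c i • (i : EuclideanSpace ℂ (Fin d)) := by
      have hmem : Ψ ∈ Submodule.span ℂ (S : Set (EuclideanSpace ℂ (Fin d))) := by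
        rw [hspan]; trivial
      obtain ⟨f, -, hf⟩ := Submodule.mem_span_finset.mp hmem
      refine ⟨fun i => f ↑i, ?_⟩
      rw [← hf, ← Finset.sum_coe_sort S (fun x => f x • x)]
    set L := {t : ℝ | ∃ c : ↥S → ℂ, Ψ = ∑ i : ↥S, c i • (i : EuclideanSpace ℂ (Fin d)) ∧
      t = ∑ i : ↥S, ‖c i‖} with hL
    have hLne : L.Nonempty := by
      obtain ⟨c, hc⟩ := hdec
      exact ⟨_, c, hc, rfl⟩
    have hLlb : ∀ t ∈ L, (0:ℝ) ≤ t := by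
      rintro t ⟨c, -, rfl⟩
      positivity
    set ξ := sInf L with hξ
    have hξ0 : 0 ≤ ξ := le_csInf hLne hLlb
    have hAL1 : ∀ r ∈ A, ∃ t ∈ L, t ^ 2 ≤ r := by
      rintro r ⟨m, c, φ, hφ, hΨeq, rfl⟩
      obtain ⟨cc, h1, h2⟩ := collapse S c φ hφ
      refine ⟨∑ i : ↥S, ‖cc i‖, ⟨cc, by rw [hΨeq, h1], rfl⟩, ?_⟩
      have h0 : (0:ℝ) ≤ ∑ i : ↥S, ‖cc i‖ := by positivity
      exact pow_le_pow_left₀ h0 h2 2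
    have hAL2 : ∀ t ∈ L, t ^ 2 ∈ A := by
      rintro t ⟨c, hc, rfl⟩
      refine ⟨S.card, fun j => c (S.equivFin.symm j), fun j => ↑(S.equivFin.symm j),
        fun j => (S.equivFin.symm j).2, ?_, ?_⟩
      · rw [hc]
        exact (Equiv.sum_comp S.equivFin.symm
          (fun i => c i • (i : EuclideanSpace ℂ (Fin d)))).symm
      · congr 1
        exact (Equiv.sum_comp S.equivFin.symm (fun i => ‖c i‖)).symm
    have hAne : A.Nonempty := by
      obtain ⟨t, ht⟩ := hLne
      exact ⟨t ^ 2, hAL2 t ht⟩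
    have hInfA : sInf A = ξ ^ 2 := by
      apply le_antisymm
      · have hsq : Real.sqrt (sInf A) ≤ ξ := by
          apply le_csInf hLne
          intro t ht
          have h1 : sInf A ≤ t ^ 2 := csInf_le ⟨0, hAlb0⟩ (hAL2 t ht)
          have h2 := Real.sqrt_le_sqrt h1
          rwa [Real.sqrt_sq (hLlb t ht)] at h2
        have h0 : 0 ≤ sInf A := le_csInf hAne hAlb0
        calc sInf A = Real.sqrt (sInf A) ^ 2 := (Real.sq_sqrt h0).symm
          _ ≤ ξ ^ 2 := pow_le_pow_left₀ (Real.sqrt_nonneg _) hsq 2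
      · apply le_csInf hAne
        intro r hr
        obtain ⟨t, htL, ht2⟩ := hAL1 r hr
        exact le_trans (pow_le_pow_left₀ hξ0 (csInf_le ⟨0, hLlb⟩ htL) 2) ht2
    have hBub : ∀ r ∈ B, r ≤ ξ ^ 2 := by
      rintro r ⟨ω, hω, rfl⟩
      have h1 : ‖⟪ω, Ψ⟫_ℂ‖ ≤ ξ := by
        apply le_csInf hLne
        rintro t ⟨c, hc, rfl⟩
        calc ‖⟪ω, Ψ⟫_ℂ‖
            = ‖∑ i : ↥S, c i * ⟪ω, (i : EuclideanSpace ℂ (Fin d))⟫_ℂ‖ := by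
              rw [hc, inner_sum]
              simp [inner_smul_right]
          _ ≤ ∑ i : ↥S, ‖c i * ⟪ω, (i : EuclideanSpace ℂ (Fin d))⟫_ℂ‖ :=
              norm_sum_le _ _
          _ ≤ ∑ i : ↥S, ‖c i‖ := by
              refine Finset.sum_le_sum fun i _ => ?_
              rw [norm_mul]
              exact mul_le_of_le_one_right (norm_nonneg _) (hω ↑i i.2)
      exact pow_le_pow_left₀ (norm_nonneg _) h1 2
    have hBbdd : BddAbove B := ⟨ξ ^ 2, hBub⟩
    have hSupB_le : sSup B ≤ ξ ^ 2 := csSup_le ⟨0, hB0⟩ hBub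
    have hSupB_ge : ξ ^ 2 ≤ sSup B := by
      by_contra hcon
      push_neg at hcon
      have h0B : 0 ≤ sSup B := le_csSup hBbdd hB0
      set t := Real.sqrt (sSup B) with htdef
      have ht0 : 0 ≤ t := Real.sqrt_nonneg _
      have ht2 : t ^ 2 = sSup B := Real.sq_sqrt h0B
      have htξ : t < ξ := by nlinarith
      have hnot : ∀ c : ↥S → ℂ, Ψ = ∑ i : ↥S, c i • (i : EuclideanSpace ℂ (Fin d)) →
          t < ∑ i : ↥S, ‖c i‖ := by
        intro c hc
        have hmem : (∑ i : ↥S, ‖c i‖) ∈ L := ⟨c, hc, rfl⟩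
        have := csInf_le ⟨0, hLlb⟩ hmem
        linarith
      obtain ⟨ω, hω1, hω2⟩ := key_witness S hSne Ψ hdec t ht0 hnot
      have hmemB : ‖⟪ω, Ψ⟫_ℂ‖ ^ 2 ∈ B := ⟨ω, hω1, rfl⟩
      have := le_csSup hBbdd hmemB
      nlinarith
    rw [hInfA]
    exact le_antisymm hSupB_ge hSupB_le
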